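/- Fix integers $T \ge 1$ and a window length $1 \le m \le T$, and partition $\{1,\dots,T\}$ into contiguous windows $\mathcal{T}_1,\dots,\mathcal{T}_W$ each of length at most $m$. Let $X$ be compact, $u_1,\dots,u_T : X \to \mathbb{R}$ continuous payoff functions, and $\pi_1,\dots,\pi_T$ probability measures on $X$. Define the dynamic regret $D(T) = \sum_{t=1}^T(\max_x u_t(x) - \int u_t\,d\pi_t)$, the per-window static regret $R(\mathcal{T}_w) = \max_x\sum_{t\in\mathcal{T}_w}(u_t(x) - \int u_t\,d\pi_t)$, and the total variation $V = \sum_{t=1}^{T-1}\|u_{t+1}-u_t\|_\infty$. Then $D(T) \le \sum_{w=1}^W R(\mathcal{T}_w) + 2m\,V$. -/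

import Mathlib

open MeasureTheory Finset

section Aux

variable {X : Type*} [TopologicalSpace X] [CompactSpace X] [Nonempty X]

lemma exists_max_aux (f : X → ℝ) (hf : Continuous f) : ∃ x, ∀ y, f y ≤ f x := by
  obtain ⟨x, -, hx⟩ := isCompact_univ.exists_isMaxOn Set.univ_nonempty hf.continuousOn
  exact ⟨x, fun y => hx (Set.mem_univ y)⟩

lemma bddAbove_range_aux (f : X → ℝ) (hf : Continuous f) : BddAbove (Set.range f) := by
  obtain ⟨x, hx⟩ := exists_max_aux f hf
  exact ⟨f x, by rintro _ ⟨y, rfl⟩; exact hx y⟩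

lemma telescope_aux (f : ℕ → ℝ) {a b : ℕ} (hab : a ≤ b) :
    f b - f a = ∑ r ∈ Finset.Ico a b, (f (r + 1) - f r) := by
  induction b with
  | zero => interval_cases a; simp
  | succ n ih =>
    rcases Nat.lt_or_ge a (n + 1) with h | h
    · have h' : a ≤ n := Nat.lt_succ_iff.mp h
      rw [Finset.sum_Ico_succ_top h', ← ih h']
      ring
    · have : a = n + 1 := le_antisymm hab h
      subst this; simp

end Aux

lemma e0_le_aux (e : ℕ → ℕ) : ∀ n, (∀ i < n, e i ≤ e (i + 1)) → e 0 ≤ e n := by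
  intro n
  induction n with
  | zero => intro _; exact le_refl _
  | succ k ih =>
    intro h
    exact (ih fun i hi => h i (Nat.lt_succ_of_lt hi)).trans (h k (Nat.lt_succ_self k))

lemma sum_Ioc_partition_aux (f : ℕ → ℝ) (e : ℕ → ℕ) (n : ℕ)
    (hmono : ∀ i < n, e i ≤ e (i + 1)) :
    ∑ w ∈ Finset.range n, ∑ t ∈ Finset.Ioc (e w) (e (w + 1)), f t
      = ∑ t ∈ Finset.Ioc (e 0) (e n), f t := by
  induction n with
  | zero => simp
  | succ n ih =>
    have h0n : e 0 ≤ e n := e0_le_aux e n fun i hi => hmono i (Nat.lt_succ_of_lt hi)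
    rw [Finset.sum_range_succ, ih (fun i hi => hmono i (Nat.lt_succ_of_lt hi)),
      Finset.sum_Ioc_consecutive f h0n (hmono n (Nat.lt_succ_self _))]

lemma per_window_aux {X : Type*} [TopologicalSpace X] [CompactSpace X] [Nonempty X]
    (u : ℕ → X → ℝ) (huc : ∀ t, Continuous (u t)) (c : ℕ → ℝ)
    (a b m : ℕ) (hab : a < b) (hm : b - a ≤ m) :
    ∑ t ∈ Finset.Ioc a b, ((⨆ x : X, u t x) - c t)
      ≤ (⨆ x : X, ∑ t ∈ Finset.Ioc a b, (u t x - c t))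
        + 2 * m * ∑ r ∈ Finset.Ioc a (b - 1), ⨆ x : X, |u (r + 1) x - u r x| := by
  have hVbdd : ∀ r, BddAbove (Set.range fun x : X => |u (r + 1) x - u r x|) :=
    fun r => bddAbove_range_aux _ (((huc (r + 1)).sub (huc r)).abs)
  have hVnn : ∀ r, 0 ≤ ⨆ x : X, |u (r + 1) x - u r x| := fun r =>
    le_trans (abs_nonneg _) (le_ciSup (hVbdd r) (Classical.arbitrary X))
  have hVle : ∀ r (y : X), |u (r + 1) y - u r y| ≤ ⨆ x : X, |u (r + 1) x - u r x| :=
    fun r y => le_ciSup (hVbdd r) y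
  set S : ℝ := ∑ r ∈ Finset.Ioc a (b - 1), ⨆ x : X, |u (r + 1) x - u r x| with hS
  have hSnn : 0 ≤ S := Finset.sum_nonneg fun r _ => hVnn r
  obtain ⟨x₀, hx₀⟩ := exists_max_aux (u (a + 1)) (huc (a + 1))
  have hstep : ∀ t ∈ Finset.Ioc a b, (⨆ x : X, u t x) - u t x₀ ≤ 2 * S := by
    intro t ht
    simp only [Finset.mem_Ioc] at ht
    have hat : a + 1 ≤ t := ht.1
    have hD : ∀ y : X, |u t y - u (a + 1) y| ≤ S := by
      intro y
      have htel : u t y - u (a + 1) y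
          = ∑ r ∈ Finset.Ico (a + 1) t, (u (r + 1) y - u r y) :=
        telescope_aux (fun s => u s y) hat
      rw [htel]
      refine (Finset.abs_sum_le_sum_abs _ _).trans ?_
      refine le_trans (Finset.sum_le_sum fun r _ => hVle r y) ?_
      refine Finset.sum_le_sum_of_subset_of_nonneg ?_ fun r _ _ => hVnn r
      intro r hr
      simp only [Finset.mem_Ico, Finset.mem_Ioc] at hr ⊢
      omega
    have hub : ∀ y : X, u t y ≤ u t x₀ + 2 * S := by
      intro y
      have h1 : u t y - u (a + 1) y ≤ S := (le_abs_self _).trans (hD y)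
      have h2 : u (a + 1) x₀ - u t x₀ ≤ S := by
        refine (le_abs_self _).trans ?_
        rw [abs_sub_comm]; exact hD x₀
      have h3 := hx₀ y
      linarith
    have := ciSup_le hub
    linarith
  have hsum1 : ∑ t ∈ Finset.Ioc a b, ((⨆ x : X, u t x) - u t x₀)
      ≤ (m : ℝ) * (2 * S) := by
    have h := Finset.sum_le_card_nsmul (Finset.Ioc a b) _ (2 * S) hstep
    rw [Nat.card_Ioc] at h
    have hcard : ((b - a : ℕ) : ℝ) ≤ (m : ℝ) := by exact_mod_cast hm
    calc ∑ t ∈ Finset.Ioc a b, ((⨆ x : X, u t x) - u t x₀)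
        ≤ ((b - a : ℕ) : ℝ) * (2 * S) := by simpa [nsmul_eq_mul] using h
      _ ≤ (m : ℝ) * (2 * S) := by nlinarith
  have hsum2 : ∑ t ∈ Finset.Ioc a b, (u t x₀ - c t)
      ≤ ⨆ x : X, ∑ t ∈ Finset.Ioc a b, (u t x - c t) :=
    le_ciSup (bddAbove_range_aux _
      (continuous_finset_sum _ fun t _ => (huc t).sub continuous_const)) x₀
  have hsplit : ∑ t ∈ Finset.Ioc a b, ((⨆ x : X, u t x) - c t)
      = (∑ t ∈ Finset.Ioc a b, ((⨆ x : X, u t x) - u t x₀))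
        + ∑ t ∈ Finset.Ioc a b, (u t x₀ - c t) := by
    rw [← Finset.sum_add_distrib]
    exact Finset.sum_congr rfl fun t _ => by ring
  rw [hsplit]
  have : (m : ℝ) * (2 * S) = 2 * m * S := by ring
  linarith

/-- dynamic regret is bounded by the sum of per-window static
regrets plus `2 m V`, where `V` is the total variation of the payoffs. -/
theorem dynamic_regret_window_decomposition
    {X : Type*} [TopologicalSpace X] [CompactSpace X] [Nonempty X]
    [MeasurableSpace X] [BorelSpace X]
    (T m : ℕ) (hT : 1 ≤ T) (hm1 : 1 ≤ m) (hmT : m ≤ T)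
    -- window boundaries: `0 = e 0 < e 1 < … < e W = T`, window `w` is
    -- `Icc (e w + 1) (e (w+1))`, of length `e (w+1) - e w ≤ m`
    (W : ℕ) (e : ℕ → ℕ) (he0 : e 0 = 0) (heW : e W = T)
    (hemono : StrictMonoOn e (Set.Iic W))
    (helen : ∀ w < W, e (w + 1) - e w ≤ m)
    (u : ℕ → X → ℝ) (huc : ∀ t, Continuous (u t))
    (π : ℕ → Measure X) (hπ : ∀ t, IsProbabilityMeasure (π t)) :
    ∑ t ∈ Finset.Icc 1 T, ((⨆ x : X, u t x) - ∫ z, u t z ∂(π t))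
      ≤ (∑ w ∈ Finset.range W,
            ⨆ x : X, ∑ t ∈ Finset.Icc (e w + 1) (e (w + 1)),
              (u t x - ∫ z, u t z ∂(π t)))
        + 2 * m * ∑ t ∈ Finset.Icc 1 (T - 1), ⨆ x : X, |u (t + 1) x - u t x| := by
  have hVbdd : ∀ r, BddAbove (Set.range fun x : X => |u (r + 1) x - u r x|) :=
    fun r => bddAbove_range_aux _ (((huc (r + 1)).sub (huc r)).abs)
  have hVnn : ∀ r, 0 ≤ ⨆ x : X, |u (r + 1) x - u r x| := fun r =>
    le_trans (abs_nonneg _) (le_ciSup (hVbdd r) (Classical.arbitrary X))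
  have hmono' : ∀ i < W, e i ≤ e (i + 1) := fun i hi =>
    (hemono (Set.mem_Iic.mpr (by omega)) (Set.mem_Iic.mpr (by omega))
      (Nat.lt_succ_self i)).le
  have hstrict : ∀ w < W, e w < e (w + 1) := fun w hw =>
    hemono (Set.mem_Iic.mpr (by omega)) (Set.mem_Iic.mpr (by omega)) (Nat.lt_succ_self w)
  have hub : ∀ w, w ≤ W → e w ≤ T := by
    intro w hw
    rcases eq_or_lt_of_le hw with rfl | hw'
    · exact le_of_eq heW
    · exact heW ▸ (hemono (Set.mem_Iic.mpr hw) (Set.mem_Iic.mpr le_rfl) hw').le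
  rw [show Finset.Icc 1 T = Finset.Ioc 0 T from Finset.Icc_add_one_left_eq_Ioc 0 T,
    show Finset.Icc 1 (T - 1) = Finset.Ioc 0 (T - 1) from Finset.Icc_add_one_left_eq_Ioc 0 (T - 1)]
  simp only [Finset.Icc_add_one_left_eq_Ioc]
  have hpart := sum_Ioc_partition_aux
    (fun t => (⨆ x : X, u t x) - ∫ z, u t z ∂(π t)) e W hmono'
  rw [he0, heW] at hpart
  rw [← hpart]
  have key : ∀ w ∈ Finset.range W,
      ∑ t ∈ Finset.Ioc (e w) (e (w + 1)), ((⨆ x : X, u t x) - ∫ z, u t z ∂(π t))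
        ≤ (⨆ x : X, ∑ t ∈ Finset.Ioc (e w) (e (w + 1)), (u t x - ∫ z, u t z ∂(π t)))
          + 2 * m * ∑ r ∈ Finset.Ioc (e w) (e (w + 1) - 1),
              ⨆ x : X, |u (r + 1) x - u r x| := by
    intro w hw
    exact per_window_aux u huc (fun t => ∫ z, u t z ∂(π t)) (e w) (e (w + 1)) m
      (hstrict w (Finset.mem_range.mp hw)) (helen w (Finset.mem_range.mp hw))
  have hfinal : ∑ w ∈ Finset.range W, ∑ r ∈ Finset.Ioc (e w) (e (w + 1) - 1),
        ⨆ x : X, |u (r + 1) x - u r x|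
      ≤ ∑ r ∈ Finset.Ioc 0 (T - 1), ⨆ x : X, |u (r + 1) x - u r x| := by
    set g : ℕ → ℝ := fun r => if r ≤ T - 1 then ⨆ x : X, |u (r + 1) x - u r x| else 0
      with hg
    have hgnn : ∀ r, 0 ≤ g r := by
      intro r
      by_cases h : r ≤ T - 1 <;> simp [hg, h, hVnn r]
    have h1 : ∀ w ∈ Finset.range W,
        ∑ r ∈ Finset.Ioc (e w) (e (w + 1) - 1), ⨆ x : X, |u (r + 1) x - u r x|
          ≤ ∑ r ∈ Finset.Ioc (e w) (e (w + 1)), g r := by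
      intro w hw
      have hbT : e (w + 1) ≤ T := hub (w + 1) (Finset.mem_range.mp hw)
      have heq : ∑ r ∈ Finset.Ioc (e w) (e (w + 1) - 1),
            ⨆ x : X, |u (r + 1) x - u r x|
          = ∑ r ∈ Finset.Ioc (e w) (e (w + 1) - 1), g r := by
        refine Finset.sum_congr rfl fun r hr => ?_
        simp only [Finset.mem_Ioc] at hr
        have hrT : r ≤ T - 1 := by
          have := hstrict w (Finset.mem_range.mp hw); omega
        simp [hg, hrT]
      rw [heq]
      refine Finset.sum_le_sum_of_subset_of_nonneg ?_ fun r _ _ => hgnn r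
      intro r hr
      simp only [Finset.mem_Ioc] at hr ⊢
      omega
    have h2 : ∑ w ∈ Finset.range W, ∑ r ∈ Finset.Ioc (e w) (e (w + 1)), g r
        = ∑ r ∈ Finset.Ioc 0 T, g r := by
      have := sum_Ioc_partition_aux g e W hmono'
      rwa [he0, heW] at this
    have h3 : ∑ r ∈ Finset.Ioc 0 T, g r
        = ∑ r ∈ Finset.Ioc 0 (T - 1), ⨆ x : X, |u (r + 1) x - u r x| := by
      rw [← Finset.sum_Ioc_consecutive g (Nat.zero_le (T - 1)) (by omega : T - 1 ≤ T)]
      have hsing : Finset.Ioc (T - 1) T = {T} := by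
        ext r; simp only [Finset.mem_Ioc, Finset.mem_singleton]; omega
      have hgT : g T = 0 := by
        have h : ¬ T ≤ T - 1 := by omega
        simp [hg, h]
      rw [hsing, Finset.sum_singleton, hgT, add_zero]
      refine Finset.sum_congr rfl fun r hr => ?_
      simp only [Finset.mem_Ioc] at hr
      simp [hg, hr.2]
    calc ∑ w ∈ Finset.range W, ∑ r ∈ Finset.Ioc (e w) (e (w + 1) - 1),
          ⨆ x : X, |u (r + 1) x - u r x|
        ≤ ∑ w ∈ Finset.range W, ∑ r ∈ Finset.Ioc (e w) (e (w + 1)), g r :=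
          Finset.sum_le_sum h1
      _ = ∑ r ∈ Finset.Ioc 0 (T - 1), ⨆ x : X, |u (r + 1) x - u r x| := by
          rw [h2, h3]
  calc ∑ w ∈ Finset.range W,
        ∑ t ∈ Finset.Ioc (e w) (e (w + 1)), ((⨆ x : X, u t x) - ∫ z, u t z ∂(π t))
      ≤ ∑ w ∈ Finset.range W,
          ((⨆ x : X, ∑ t ∈ Finset.Ioc (e w) (e (w + 1)), (u t x - ∫ z, u t z ∂(π t)))
            + 2 * m * ∑ r ∈ Finset.Ioc (e w) (e (w + 1) - 1),
                ⨆ x : X, |u (r + 1) x - u r x|) := Finset.sum_le_sum key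
    _ = (∑ w ∈ Finset.range W,
          ⨆ x : X, ∑ t ∈ Finset.Ioc (e w) (e (w + 1)), (u t x - ∫ z, u t z ∂(π t)))
          + 2 * m * ∑ w ∈ Finset.range W,
              ∑ r ∈ Finset.Ioc (e w) (e (w + 1) - 1),
                ⨆ x : X, |u (r + 1) x - u r x| := by
        rw [Finset.sum_add_distrib, Finset.mul_sum]
    _ ≤ (∑ w ∈ Finset.range W,
          ⨆ x : X, ∑ t ∈ Finset.Ioc (e w) (e (w + 1)), (u t x - ∫ z, u t z ∂(π t)))
          + 2 * m * ∑ r ∈ Finset.Ioc 0 (T - 1), ⨆ x : X, |u (r + 1) x - u r x| := by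
        have h2m : (0 : ℝ) ≤ 2 * m := by positivity
        exact add_le_add_right (mul_le_mul_of_nonneg_left hfinal h2m) _
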